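/- The (q,b)-Fibonacci polynomials F_n(x,b,s,q) (defined by the explicit sum) satisfy the recursion F_n(x,b,s,q) = x·F_{n-1}(x,qb,qs,q) + (qs/((1-qb)(1-q²b)))·F_{n-2}(x,q²b,q²s,q) for all n ≥ 2, with F_0 = 0, F_1 = 1. -/

import Mathlib

open Finset

noncomputable section

/-- The field `ℚ(q,b,s,x)` of rational functions. -/
abbrev K : Type := FractionRing (MvPolynomial (Fin 4) ℚ)

def q : K := algebraMap (MvPolynomial (Fin 4) ℚ) K (MvPolynomial.X 0)
def b : K := algebraMap (MvPolynomial (Fin 4) ℚ) K (MvPolynomial.X 1)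
def s : K := algebraMap (MvPolynomial (Fin 4) ℚ) K (MvPolynomial.X 2)
def x : K := algebraMap (MvPolynomial (Fin 4) ℚ) K (MvPolynomial.X 3)

/-- The q-Pochhammer symbol `(a;q)_n = ∏_{j=0}^{n-1} (1 - q^j a)`. -/
def qPoch (a : K) (n : ℕ) : K := ∏ j ∈ range n, (1 - q ^ j * a)

/-- The Gaussian binomial coefficient `[n choose k]_q`. -/
def gbinom (n k : ℕ) : K := qPoch q n / (qPoch q k * qPoch q (n - k))

/-- The (q,b)-Fibonacci polynomials, defined by the explicit sum (2.4),
as functions of the parameters `b` and `s`. -/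
def qbFib (n : ℕ) (b s : K) : K :=
  if n = 0 then 0 else
    ∑ k ∈ range ((n - 1) / 2 + 1),
      q ^ (k ^ 2) * gbinom (n - 1 - k) k * s ^ k * x ^ (n - 1 - 2 * k) /
        (qPoch (q * b) k * qPoch (q ^ (n - k) * b) k)

lemma one_sub_q_pow_succ_ne_zero (j : ℕ) : (1:K) - q^(j+1) ≠ 0 := by
  rw [q, ← map_pow, ← map_one (algebraMap (MvPolynomial (Fin 4) ℚ) K), ← map_sub,
    Ne, IsFractionRing.to_map_eq_zero_iff]
  intro h
  have := congrArg (MvPolynomial.eval (fun _ => (0:ℚ))) h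
  simp [zero_pow] at this

lemma one_sub_q_pow_mul_b_ne_zero (j : ℕ) : (1:K) - q^j * b ≠ 0 := by
  rw [q, b, ← map_pow, ← map_mul, ← map_one (algebraMap (MvPolynomial (Fin 4) ℚ) K), ← map_sub,
    Ne, IsFractionRing.to_map_eq_zero_iff]
  intro h
  have := congrArg (MvPolynomial.eval (fun _ => (0:ℚ))) h
  simp at this

lemma qPoch_q_ne_zero (m : ℕ) : qPoch q m ≠ 0 := by
  refine Finset.prod_ne_zero_iff.mpr fun i _ => ?_
  rw [show q^i*q = q^(i+1) from (pow_succ q i).symm]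
  exact one_sub_q_pow_succ_ne_zero i

lemma qPoch_b_ne_zero (t k : ℕ) : qPoch (q^t*b) k ≠ 0 := by
  refine Finset.prod_ne_zero_iff.mpr fun i _ => ?_
  rw [show q^i*(q^t*b) = q^(i+t)*b by rw [← mul_assoc, ← pow_add]]
  exact one_sub_q_pow_mul_b_ne_zero (i+t)

lemma qPoch_succ (a : K) (k : ℕ) : qPoch a (k+1) = qPoch a k * (1 - q^k * a) :=
  Finset.prod_range_succ _ _

lemma qPoch_shift (a : K) (k : ℕ) : qPoch a (k+1) = (1 - a) * qPoch (q*a) k := by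
  rw [qPoch, Finset.prod_range_succ', pow_zero, one_mul, mul_comm]
  congr 1
  refine Finset.prod_congr rfl fun i _ => ?_
  ring_nf

lemma qPoch_zero (a : K) : qPoch a 0 = 1 := Finset.prod_range_zero _

lemma gbinom_zero (m : ℕ) : gbinom m 0 = 1 := by
  rw [gbinom, qPoch_zero, one_mul, Nat.sub_zero, div_self (qPoch_q_ne_zero m)]

lemma gbinom_self (m : ℕ) : gbinom m m = 1 := by
  rw [gbinom, Nat.sub_self, qPoch_zero, mul_one, div_self (qPoch_q_ne_zero m)]

lemma qPoch_qb_rel (k : ℕ) :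
    qPoch (q*b) (k+1) * (1 - q^(k+2)*b) = (1-q*b)*((1-q^2*b)*qPoch (q^3*b) k) := by
  have h1 : qPoch (q*b) (k+2) = qPoch (q*b) (k+1) * (1 - q^(k+2)*b) := by
    rw [qPoch_succ]; ring
  have h2 : qPoch (q*b) (k+2) = (1-q*b) * ((1-q^2*b) * qPoch (q^3*b) k) := by
    rw [qPoch_shift, qPoch_shift, show q*(q*(q*b)) = q^3*b by ring, show q*(q*b) = q^2*b by ring]
  exact h1.symm.trans h2

lemma qPoch_q_succ (m : ℕ) : qPoch q (m+1) = qPoch q m * (1 - q^(m+1)) := by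
  rw [qPoch_succ]; ring

lemma pascalA (j d : ℕ) :
    gbinom (j+d+2) (j+1) = gbinom (j+d+1) j + q^(j+1) * gbinom (j+d+1) (j+1) := by
  unfold gbinom
  rw [show j+d+2-(j+1) = d+1 by omega, show j+d+1-j = d+1 by omega,
    show j+d+1-(j+1) = d by omega, show j+d+2 = (j+d+1)+1 by omega,
    qPoch_q_succ (j+d+1), qPoch_q_succ j, qPoch_q_succ d]
  have h1 := qPoch_q_ne_zero (j+d+1)
  have h2 := qPoch_q_ne_zero j
  have h3 := qPoch_q_ne_zero d
  have h4 := one_sub_q_pow_succ_ne_zero j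
  have h5 := one_sub_q_pow_succ_ne_zero d
  field_simp
  ring

lemma pascalB (j d : ℕ) :
    gbinom (j+d+2) (j+1) = gbinom (j+d+1) (j+1) + q^(d+1) * gbinom (j+d+1) j := by
  unfold gbinom
  rw [show j+d+2-(j+1) = d+1 by omega, show j+d+1-j = d+1 by omega,
    show j+d+1-(j+1) = d by omega, show j+d+2 = (j+d+1)+1 by omega,
    qPoch_q_succ (j+d+1), qPoch_q_succ j, qPoch_q_succ d]
  have h1 := qPoch_q_ne_zero (j+d+1)
  have h2 := qPoch_q_ne_zero j
  have h3 := qPoch_q_ne_zero d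
  have h4 := one_sub_q_pow_succ_ne_zero j
  have h5 := one_sub_q_pow_succ_ne_zero d
  field_simp
  ring


lemma key (j d : ℕ) :
    q^((j+1)^2) * gbinom (j+d+2) (j+1) * s^(j+1) * x^(d+1) /
      (qPoch (q*b) (j+1) * qPoch (q^(j+d+3)*b) (j+1))
    = x * (q^((j+1)^2) * gbinom (j+d+1) (j+1) * (q*s)^(j+1) * x^d /
        (qPoch (q*(q*b)) (j+1) * qPoch (q^(j+d+2)*(q*b)) (j+1)))
    + (q*s/((1-q*b)*(1-q^2*b))) * (q^(j^2) * gbinom (j+d+1) j * (q^2*s)^j * x^(d+1) /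
        (qPoch (q*(q^2*b)) j * qPoch (q^(j+d+2)*(q^2*b)) j)) := by
  rw [show q*(q*b) = q^2*b by ring, show q*(q^2*b) = q^3*b by ring,
    show q^(j+d+2)*(q*b) = q^(j+d+3)*b by ring, show q^(j+d+2)*(q^2*b) = q^(j+d+4)*b by ring]
  rw [qPoch_shift (q^2*b) j, show q*(q^2*b) = q^3*b by ring]
  rw [qPoch_shift (q^(j+d+3)*b) j, show q*(q^(j+d+3)*b) = q^(j+d+4)*b by ring]
  have hP : qPoch (q*b) (j+1) = (1-q*b)*((1-q^2*b)*qPoch (q^3*b) j) / (1-q^(j+2)*b) := by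
    rw [eq_div_iff (one_sub_q_pow_mul_b_ne_zero (j+2))]
    exact qPoch_qb_rel j
  rw [hP]
  have hG : gbinom (j+d+2) (j+1) =
      (q^(j+1)*(1-q*b)*gbinom (j+d+1) (j+1) + (1-q^(j+d+3)*b)*gbinom (j+d+1) j) /
        (1-q^(j+2)*b) := by
    rw [eq_div_iff (one_sub_q_pow_mul_b_ne_zero (j+2))]
    linear_combination (pascalA j d) - (q^(j+2)*b) * (pascalB j d)
  rw [hG]
  have n1 : (1:K)-q*b ≠ 0 := by
    have := one_sub_q_pow_mul_b_ne_zero 1; rwa [pow_one] at this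
  have n2 : (1:K)-q^2*b ≠ 0 := one_sub_q_pow_mul_b_ne_zero 2
  have n3 : (1:K)-q^(j+2)*b ≠ 0 := one_sub_q_pow_mul_b_ne_zero (j+2)
  have n4 : (1:K)-q^(j+d+3)*b ≠ 0 := one_sub_q_pow_mul_b_ne_zero (j+d+3)
  have n5 := qPoch_b_ne_zero 3 j
  have n6 := qPoch_b_ne_zero (j+d+4) j
  generalize hA3 : (1:K)-q^(j+2)*b = A3 at *
  generalize hA4 : (1:K)-q^(j+d+3)*b = A4 at *
  generalize hA5 : qPoch (q^3*b) j = A5 at *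
  generalize hA6 : qPoch (q^(j+d+4)*b) j = A6 at *
  field_simp
  subst hA3 hA4
  ring


lemma key_top (t : ℕ) :
    q^((t+1)^2) * gbinom (t+1) (t+1) * s^(t+1) * x^0 /
      (qPoch (q*b) (t+1) * qPoch (q^(t+2)*b) (t+1))
    = (q*s/((1-q*b)*(1-q^2*b))) * (q^(t^2) * gbinom t t * (q^2*s)^t * x^0 /
        (qPoch (q*(q^2*b)) t * qPoch (q^(t+1)*(q^2*b)) t)) := by
  rw [gbinom_self, gbinom_self, show q*(q^2*b) = q^3*b by ring,
    show q^(t+1)*(q^2*b) = q^(t+3)*b by ring]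
  rw [qPoch_shift (q^(t+2)*b) t, show q*(q^(t+2)*b) = q^(t+3)*b by ring]
  have hP : qPoch (q*b) (t+1) = (1-q*b)*((1-q^2*b)*qPoch (q^3*b) t) / (1-q^(t+2)*b) := by
    rw [eq_div_iff (one_sub_q_pow_mul_b_ne_zero (t+2))]
    exact qPoch_qb_rel t
  rw [hP]
  have n1 : (1:K)-q*b ≠ 0 := by
    have := one_sub_q_pow_mul_b_ne_zero 1; rwa [pow_one] at this
  have n2 : (1:K)-q^2*b ≠ 0 := one_sub_q_pow_mul_b_ne_zero 2
  have n3 : (1:K)-q^(t+2)*b ≠ 0 := one_sub_q_pow_mul_b_ne_zero (t+2)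
  have n5 := qPoch_b_ne_zero 3 t
  have n6 := qPoch_b_ne_zero (t+3) t
  generalize hA3 : (1:K)-q^(t+2)*b = A3 at *
  generalize hA5 : qPoch (q^3*b) t = A5 at *
  generalize hA6 : qPoch (q^(t+3)*b) t = A6 at *
  field_simp
  subst hA3
  ring

lemma sum_split {t : ℕ} {A B C : ℕ → K} (h0 : A 0 = B 0)
    (h : ∀ j ∈ range t, A (j+1) = B (j+1) + C j) :
    ∑ k ∈ range (t+1), A k = ∑ k ∈ range (t+1), B k + ∑ j ∈ range t, C j := by
  rw [Finset.sum_range_succ' A t, Finset.sum_range_succ' B t, h0,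
    Finset.sum_congr rfl h, Finset.sum_add_distrib]
  ring

lemma sum_split' {t : ℕ} {A B C : ℕ → K} (h0 : A 0 = B 0)
    (h : ∀ j ∈ range t, A (j+1) = B (j+1) + C j) (htop : A (t+1) = C t) :
    ∑ k ∈ range (t+2), A k = ∑ k ∈ range (t+1), B k + ∑ j ∈ range (t+1), C j := by
  rw [Finset.sum_range_succ A (t+1), sum_split h0 h, Finset.sum_range_succ C t, htop]
  ring

lemma qbFib_even (t : ℕ) (b' s' : K) :
    qbFib (2*t) b' s' = ∑ k ∈ range t,
      q ^ (k ^ 2) * gbinom (2*t - 1 - k) k * s' ^ k * x ^ (2*t - 1 - 2 * k) /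
        (qPoch (q * b') k * qPoch (q ^ (2*t - k) * b') k) := by
  cases t with
  | zero => simp [qbFib]
  | succ t =>
    rw [qbFib, if_neg (by omega), show (2*(t+1)-1)/2+1 = t+1 by omega]

lemma qbFib_odd (t : ℕ) (b' s' : K) :
    qbFib (2*t+1) b' s' = ∑ k ∈ range (t+1),
      q ^ (k ^ 2) * gbinom (2*t - k) k * s' ^ k * x ^ (2*t - 2 * k) /
        (qPoch (q * b') k * qPoch (q ^ (2*t+1 - k) * b') k) := by
  rw [qbFib, if_neg (by omega), show (2*t+1-1)/2+1 = t+1 by omega]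
  refine Finset.sum_congr rfl fun k _ => ?_
  rw [show 2*t+1-1-k = 2*t-k by omega, show 2*t+1-1-2*k = 2*t-2*k by omega]


theorem qbFib_shifted_recursion (n : ℕ) (hn : 2 ≤ n) :
    qbFib n b s = x * qbFib (n - 1) (q * b) (q * s) +
      (q * s / ((1 - q * b) * (1 - q ^ 2 * b))) * qbFib (n - 2) (q ^ 2 * b) (q ^ 2 * s) := by
  obtain ⟨m, rfl⟩ : ∃ m, n = m + 2 := ⟨n - 2, by omega⟩
  rcases Nat.even_or_odd m with ⟨t, ht⟩ | ⟨t, ht⟩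
  · subst ht
    rw [show t+t+2 = 2*(t+1) by omega, show 2*(t+1)-1 = 2*t+1 by omega,
      show 2*(t+1)-2 = 2*t by omega]
    rw [qbFib_even (t+1), qbFib_odd t, qbFib_even t, mul_sum, mul_sum]
    refine sum_split ?_ ?_
    · simp only [gbinom_zero, qPoch_zero, pow_zero, one_mul, mul_one, div_one]
      rw [show 2*(t+1)-1-2*0 = (2*t-2*0)+1 by omega, pow_succ']
      ring
    · intro j hj
      rw [mem_range] at hj
      obtain ⟨u, rfl⟩ : ∃ u, t = j + u + 1 := ⟨t - j - 1, by omega⟩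
      rw [show 2*(j+u+1+1)-1-(j+1) = j+2*u+2 by omega,
        show 2*(j+u+1+1)-1-2*(j+1) = 2*u+1 by omega,
        show 2*(j+u+1+1)-(j+1) = j+2*u+3 by omega,
        show 2*(j+u+1)-(j+1) = j+2*u+1 by omega,
        show 2*(j+u+1)-2*(j+1) = 2*u by omega,
        show 2*(j+u+1)+1-(j+1) = j+2*u+2 by omega,
        show 2*(j+u+1)-1-j = j+2*u+1 by omega,
        show 2*(j+u+1)-1-2*j = 2*u+1 by omega,
        show 2*(j+u+1)-j = j+2*u+2 by omega]
      exact key j (2*u)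
  · subst ht
    rw [show 2*t+1+2 = 2*(t+1)+1 by omega, show 2*(t+1)+1-1 = 2*(t+1) by omega,
      show 2*(t+1)+1-2 = 2*t+1 by omega]
    rw [qbFib_odd (t+1), qbFib_even (t+1), qbFib_odd t, mul_sum, mul_sum]
    refine sum_split' ?_ ?_ ?_
    · simp only [gbinom_zero, qPoch_zero, pow_zero, one_mul, mul_one, div_one]
      rw [show 2*(t+1)-2*0 = (2*(t+1)-1-2*0)+1 by omega, pow_succ']
      ring
    · intro j hj
      rw [mem_range] at hj
      obtain ⟨u, rfl⟩ : ∃ u, t = j + u + 1 := ⟨t - j - 1, by omega⟩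
      rw [show 2*(j+u+1+1)-(j+1) = j+(2*u+1)+2 by omega,
        show 2*(j+u+1+1)-2*(j+1) = (2*u+1)+1 by omega,
        show 2*(j+u+1+1)+1-(j+1) = j+(2*u+1)+3 by omega,
        show 2*(j+u+1+1)-1-(j+1) = j+(2*u+1)+1 by omega,
        show 2*(j+u+1+1)-1-2*(j+1) = 2*u+1 by omega,
        show 2*(j+u+1)-j = j+(2*u+1)+1 by omega,
        show 2*(j+u+1)-2*j = (2*u+1)+1 by omega,
        show 2*(j+u+1)+1-j = j+(2*u+1)+2 by omega]
      exact key j (2*u+1)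
    · rw [show 2*(t+1)-(t+1) = t+1 by omega, show 2*(t+1)-2*(t+1) = 0 by omega,
        show 2*(t+1)+1-(t+1) = t+2 by omega, show 2*t-t = t by omega,
        show 2*t-2*t = 0 by omega, show 2*t+1-t = t+1 by omega]
      exact key_top t


end
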